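/- (LGD formula of Proposition 1.) Let x ∈ L²(ℝ, ℂ) and let g : ℝ → ℂ be such that g ∈ L²(ℝ) and Tg ∈ L²(ℝ), where Tg(τ) = τ·g(τ). Fix t ∈ ℝ and suppose there are r, Φ : ℝ → ℝ with V^t_g x(t, ν) = r(ν) · exp(2πi·Φ(ν)) for all ν in a neighbourhood of ω, where r and Φ are differentiable at ω and r(ω) > 0. Then the local group delay satisfies −Φ'(ω) = Re( V^t_{Tg} x(t, ω) / V^t_g x(t, ω) ). -/

import Mathlib

open MeasureTheory Complex Real Filter

/-- Time-invariant STFT: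
`V^t_g x (t, ω) = ∫ τ, x τ * conj (g (τ - t)) * exp (-2πiω(τ - t))`. -/
noncomputable def stftTimeInv (g x : ℝ → ℂ) (t ω : ℝ) : ℂ :=
  ∫ τ : ℝ, x τ * (starRingEnd ℂ) (g (τ - t)) *
    Complex.exp (-2 * Real.pi * Complex.I * (ω : ℂ) * ((τ : ℂ) - (t : ℂ)))

lemma lgd_ratio_aux (E0 : ℂ) (rω r' Φ' : ℝ) (hE0 : E0 ≠ 0) (hrω : rω ≠ 0) :
    (((r' : ℂ) * E0 + (rω : ℂ) * (E0 * (2 * Real.pi * Complex.I * (Φ' : ℂ)))) /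
        (-2 * Real.pi * Complex.I)) / ((rω : ℂ) * E0)
      = ((-Φ' : ℝ) : ℂ) + Complex.I * ((r' / (2 * Real.pi * rω) : ℝ) : ℂ) := by
  have hπ : (Real.pi : ℂ) ≠ 0 := Complex.ofReal_ne_zero.mpr Real.pi_ne_zero
  have hI : Complex.I ≠ 0 := Complex.I_ne_zero
  have hrc : (rω : ℂ) ≠ 0 := Complex.ofReal_ne_zero.mpr hrω
  push_cast
  field_simp
  linear_combination (-(r' : ℂ)) * Complex.I_sq

/-- LGD formula of Proposition 1: For `x ∈ L²` and `g` with `g, Tg ∈ L²`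
(`Tg τ = τ · g τ`), if near `ω` we have the polar decomposition
`V^t_g x (t, ·) = r · exp(2πiΦ)` with `r`, `Φ` differentiable at `ω` and `r ω > 0`, then
`−Φ' ω = Re (V^t_{Tg} x (t, ω) / V^t_g x (t, ω))`. -/
theorem lgd_formula
    (x g : ℝ → ℂ)
    (hx : MemLp x 2 (volume : Measure ℝ))
    (hg : MemLp g 2 (volume : Measure ℝ))
    (hTg : MemLp (fun τ : ℝ => (τ : ℂ) * g τ) 2 (volume : Measure ℝ))
    (t ω : ℝ) (r Φ : ℝ → ℝ) (r' Φ' : ℝ)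
    (hpolar : ∀ᶠ ν in nhds ω,
      stftTimeInv g x t ν =
        (r ν : ℂ) * Complex.exp (2 * Real.pi * Complex.I * (Φ ν : ℂ)))
    (hr : HasDerivAt r r' ω)
    (hΦ : HasDerivAt Φ Φ' ω)
    (hrpos : 0 < r ω) :
    -Φ' = (stftTimeInv (fun τ : ℝ => (τ : ℂ) * g τ) x t ω /
      stftTimeInv g x t ω).re := by
  -- translated windows are in L²
  have hmp : MeasurePreserving (fun τ : ℝ => τ - t) (volume : Measure ℝ) (volume : Measure ℝ) := by
    simpa [sub_eq_add_neg] using measurePreserving_add_right (volume : Measure ℝ) (-t)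
  have hgt : MemLp (fun τ : ℝ => g (τ - t)) 2 (volume : Measure ℝ) :=
    hg.comp_measurePreserving hmp
  have hTgt : MemLp (fun τ : ℝ => ((τ - t : ℝ) : ℂ) * g (τ - t)) 2 (volume : Measure ℝ) :=
    hTg.comp_measurePreserving hmp
  -- conjugates
  have conj_mem : ∀ {h : ℝ → ℂ}, MemLp h 2 (volume : Measure ℝ) →
      MemLp (fun τ => (starRingEnd ℂ) (h τ)) 2 (volume : Measure ℝ) := by
    intro h hh
    refine hh.of_le (Complex.continuous_conj.comp_aestronglyMeasurable hh.1) ?_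
    filter_upwards with τ; simp
  -- L² * L² is integrable
  have mul_int : ∀ {a b : ℝ → ℂ}, MemLp a 2 (volume : Measure ℝ) →
      MemLp b 2 (volume : Measure ℝ) → Integrable (fun τ => a τ * b τ) (volume : Measure ℝ) := by
    intro a b ha hb
    rw [← memLp_one_iff_integrable]
    have h12 : (1 : ENNReal) / 1 = 1 / 2 + 1 / 2 := by rw [div_one]; exact (ENNReal.add_halves 1).symm
    simpa [smul_eq_mul, Pi.mul_def] using hb.smul (p := 2) (r := 1) ha (hpqr := ⟨by simpa [one_div] using h12.symm⟩)
  have hA : Integrable (fun τ => x τ * (starRingEnd ℂ) (g (τ - t))) (volume : Measure ℝ) :=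
    mul_int hx (conj_mem hgt)
  have hB : Integrable (fun τ => x τ * (((τ - t : ℝ) : ℂ) * g (τ - t))) (volume : Measure ℝ) :=
    mul_int hx hTgt
  -- the phase factor and its properties
  set E : ℝ → ℝ → ℂ := fun ν τ => Complex.exp (-2 * Real.pi * Complex.I * (ν : ℂ) * ((τ : ℂ) - (t : ℂ)))
    with hE
  have hEnorm : ∀ ν τ : ℝ, ‖E ν τ‖ = 1 := by
    intro ν τ
    have : (-2 * Real.pi * Complex.I * (ν : ℂ) * ((τ : ℂ) - (t : ℂ)))
        = ((-2 * Real.pi * ν * (τ - t) : ℝ) : ℂ) * Complex.I := by push_cast; ring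
    rw [hE]; simp only [this]
    simpa using Complex.norm_exp_ofReal_mul_I (-2 * Real.pi * ν * (τ - t))
  have hEcont : ∀ ν : ℝ, Continuous (fun τ => E ν τ) := by
    intro ν; exact Complex.continuous_exp.comp (by continuity)
  -- integrability of the STFT integrands, for all ν
  have hFint : ∀ ν : ℝ, Integrable
      (fun τ => x τ * (starRingEnd ℂ) (g (τ - t)) * E ν τ) (volume : Measure ℝ) := by
    intro ν
    have := hA.bdd_mul (hEcont ν).aestronglyMeasurable (c := 1) (Eventually.of_forall fun τ => (hEnorm ν τ).le)
    simpa [mul_comm] using this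
  -- the derivative integrand
  set F' : ℝ → ℝ → ℂ := fun ν τ =>
      x τ * (starRingEnd ℂ) (g (τ - t)) * ((-2 * Real.pi * Complex.I * ((τ : ℂ) - (t : ℂ))) * E ν τ)
    with hF'
  have hF'norm : ∀ ν τ : ℝ, ‖F' ν τ‖ =
      2 * Real.pi * ‖x τ * (((τ - t : ℝ) : ℂ) * g (τ - t))‖ := by
    intro ν τ
    have hcast : ((τ : ℂ) - (t : ℂ)) = ((τ - t : ℝ) : ℂ) := by push_cast; ring
    simp only [hF']
    rw [hcast]
    simp only [norm_mul, hEnorm, mul_one, RCLike.norm_conj, map_mul,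
      norm_neg, Complex.norm_two, Complex.norm_I, Complex.norm_real, Real.norm_eq_abs,
      abs_of_pos Real.pi_pos]
    ring
  -- pointwise derivative in ν
  have hderiv : ∀ (τ ν : ℝ), HasDerivAt (fun ν' : ℝ =>
      x τ * (starRingEnd ℂ) (g (τ - t)) * E ν' τ) (F' ν τ) ν := by
    intro τ ν
    have h2 : HasDerivAt
        (fun ν' : ℝ => Complex.exp ((-2 * Real.pi * Complex.I * ((τ : ℂ) - (t : ℂ))) * (ν' : ℂ)))
        (Complex.exp ((-2 * Real.pi * Complex.I * ((τ : ℂ) - (t : ℂ))) * (ν : ℂ)) *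
          (-2 * Real.pi * Complex.I * ((τ : ℂ) - (t : ℂ)))) ν := by
      simpa using (((hasDerivAt_id ((ν : ℝ) : ℂ)).const_mul
        (-2 * Real.pi * Complex.I * ((τ : ℂ) - (t : ℂ)))).cexp).comp_ofReal
    have heq : (fun ν' : ℝ => E ν' τ) =
        fun ν' : ℝ => Complex.exp ((-2 * Real.pi * Complex.I * ((τ : ℂ) - (t : ℂ))) * (ν' : ℂ)) := by
      funext ν'
      show Complex.exp (-2 * Real.pi * Complex.I * (ν' : ℂ) * ((τ : ℂ) - (t : ℂ))) = _
      exact congrArg Complex.exp (by ring)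
    have h3 : HasDerivAt (fun ν' : ℝ => E ν' τ)
        (Complex.exp ((-2 * Real.pi * Complex.I * ((τ : ℂ) - (t : ℂ))) * (ν : ℂ)) *
          (-2 * Real.pi * Complex.I * ((τ : ℂ) - (t : ℂ)))) ν := by
      rw [heq]; exact h2
    have h4 := h3.const_mul (x τ * (starRingEnd ℂ) (g (τ - t)))
    refine HasDerivAt.congr_deriv h4 ?_
    simp only [hF', hE]
    rw [show (-2 * (Real.pi : ℂ) * Complex.I * ((τ : ℂ) - (t : ℂ))) * (ν : ℂ)
      = -2 * (Real.pi : ℂ) * Complex.I * (ν : ℂ) * ((τ : ℂ) - (t : ℂ)) from by ring]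
    ring
  -- dominated differentiation under the integral
  set bound : ℝ → ℝ := fun τ => 2 * Real.pi * ‖x τ * (((τ - t : ℝ) : ℂ) * g (τ - t))‖
    with hbound
  have hbound_int : Integrable bound (volume : Measure ℝ) := by
    simpa [hbound] using (hB.norm.const_mul (2 * Real.pi))
  have hmeas' : AEStronglyMeasurable (F' ω) (volume : Measure ℝ) := by
    rw [hF']
    exact ((hx.1.mul (conj_mem hgt).1).mul
      ((Continuous.mul (by continuity) (hEcont ω)).aestronglyMeasurable))
  have main := hasDerivAt_integral_of_dominated_loc_of_deriv_le (μ := (volume : Measure ℝ))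
    (F := fun ν τ => x τ * (starRingEnd ℂ) (g (τ - t)) * E ν τ) (F' := F') (x₀ := ω)
    (bound := bound) Filter.univ_mem
    (Eventually.of_forall fun ν => (hFint ν).aestronglyMeasurable)
    (hFint ω) hmeas'
    (Eventually.of_forall fun τ => fun ν _ => le_of_eq (hF'norm ν τ))
    hbound_int
    (Eventually.of_forall fun τ => fun ν _ => hderiv τ ν)
  obtain ⟨hF'int, hFhasDeriv⟩ := main
  -- identify the derivative integral with the Tg-STFT
  have hintegral : (∫ τ : ℝ, F' ω τ) =
      (-2 * Real.pi * Complex.I) * stftTimeInv (fun τ : ℝ => (τ : ℂ) * g τ) x t ω := by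
    rw [stftTimeInv, ← integral_const_mul]
    congr 1
    funext τ
    have hcast : ((τ : ℂ) - (t : ℂ)) = ((τ - t : ℝ) : ℂ) := by push_cast; ring
    rw [hF']
    simp only [map_mul, Complex.conj_ofReal, hcast, hE]
    ring
  -- F agrees with the polar form near ω
  have hFeq : (fun ν => ∫ τ : ℝ, x τ * (starRingEnd ℂ) (g (τ - t)) * E ν τ)
      =ᶠ[nhds ω] fun ν => (r ν : ℂ) * Complex.exp (2 * Real.pi * Complex.I * (Φ ν : ℂ)) := by
    filter_upwards [hpolar] with ν hν
    rw [← hν]; rfl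
  have hGhasDeriv : HasDerivAt
      (fun ν => (r ν : ℂ) * Complex.exp (2 * Real.pi * Complex.I * (Φ ν : ℂ)))
      (∫ τ : ℝ, F' ω τ) ω := hFeq.hasDerivAt_iff.mp hFhasDeriv
  -- compute the derivative of the polar form
  set E0 : ℂ := Complex.exp (2 * Real.pi * Complex.I * (Φ ω : ℂ)) with hE0
  have hrC : HasDerivAt (fun ν => ((r ν : ℝ) : ℂ)) (r' : ℂ) ω := hr.ofReal_comp
  have hinner : HasDerivAt (fun ν => (2 * Real.pi * Complex.I * (Φ ν : ℂ)))
      (2 * Real.pi * Complex.I * (Φ' : ℂ)) ω := (hΦ.ofReal_comp).const_mul _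
  have hexp : HasDerivAt (fun ν => Complex.exp (2 * Real.pi * Complex.I * (Φ ν : ℂ)))
      (E0 * (2 * Real.pi * Complex.I * (Φ' : ℂ))) ω := hinner.cexp
  have hG : HasDerivAt
      (fun ν => (r ν : ℂ) * Complex.exp (2 * Real.pi * Complex.I * (Φ ν : ℂ)))
      ((r' : ℂ) * E0 + (r ω : ℂ) * (E0 * (2 * Real.pi * Complex.I * (Φ' : ℂ)))) ω :=
    hrC.mul hexp
  have huniq : (∫ τ : ℝ, F' ω τ) =
      (r' : ℂ) * E0 + (r ω : ℂ) * (E0 * (2 * Real.pi * Complex.I * (Φ' : ℂ))) :=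
    hGhasDeriv.unique hG
  -- put everything together
  set V : ℂ := stftTimeInv (fun τ : ℝ => (τ : ℂ) * g τ) x t ω with hVdef
  have hkey : (-2 * Real.pi * Complex.I) * V =
      (r' : ℂ) * E0 + (r ω : ℂ) * (E0 * (2 * Real.pi * Complex.I * (Φ' : ℂ))) := by
    rw [← hintegral]; exact huniq
  have hVg : stftTimeInv g x t ω = (r ω : ℂ) * E0 := hpolar.self_of_nhds
  have hE0ne : E0 ≠ 0 := Complex.exp_ne_zero _
  have hrne : ((r ω : ℝ) : ℂ) ≠ 0 := by
    exact_mod_cast Complex.ofReal_ne_zero.mpr (ne_of_gt hrpos)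
  have hπne : (Real.pi : ℂ) ≠ 0 := Complex.ofReal_ne_zero.mpr Real.pi_ne_zero
  have h2ne : (-2 * (Real.pi : ℂ) * Complex.I : ℂ) ≠ 0 := by
    simp [Complex.I_ne_zero, hπne]
  have hV2 : V = ((r' : ℂ) * E0 + (r ω : ℂ) * (E0 * (2 * Real.pi * Complex.I * (Φ' : ℂ)))) /
      (-2 * Real.pi * Complex.I) := by
    rw [eq_div_iff h2ne]; linear_combination hkey
  have hratio : V / stftTimeInv g x t ω =
      ((-Φ' : ℝ) : ℂ) + Complex.I * ((r' / (2 * Real.pi * r ω) : ℝ) : ℂ) := by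
    rw [hVg, hV2]
    exact lgd_ratio_aux E0 (r ω) r' Φ' hE0ne (ne_of_gt hrpos)
  rw [hratio]
  simp only [Complex.add_re, Complex.mul_re, Complex.I_re, Complex.I_im, Complex.ofReal_re,
    Complex.ofReal_im]
  ring
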